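/- Let α be a unit speed surface curve with Darboux curvatures k_g, k_n, τ_g and k_g nowhere zero. Set y₃(s) = c₁ exp(−∫(k_n τ_g / k_g) ds), y₁(s) = (τ_g/k_g) y₃(s), y₂ = 0, for a real constant c₁. Then y₂' + k_g y₁ − τ_g y₃ = 0 and y₃' + k_n y₁ + τ_g y₂ = 0, so the associated curve γ(s) = α(s) + y₁(s)T(s) + y₃(s)U(s) satisfies γ'(s) parallel to T(s). -/

import Mathlib

noncomputable section

/-- HCC-associated helix of type 2 (`k_g ≠ 0`). -/
theorem stmt_3
    (α T V U γ : ℝ → EuclideanSpace ℝ (Fin 3)) (kg kn tg y₁ y₂ y₃ F : ℝ → ℝ) (c₁ : ℝ)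
    (hα : Differentiable ℝ α) (hT : Differentiable ℝ T)
    (hV : Differentiable ℝ V) (hU : Differentiable ℝ U)
    (hkgd : Differentiable ℝ kg) (hknd : Differentiable ℝ kn) (htgd : Differentiable ℝ tg)
    (hαT : ∀ s, deriv α s = T s)
    (hdT : ∀ s, deriv T s = kg s • V s + kn s • U s)
    (hdV : ∀ s, deriv V s = (-kg s) • T s + tg s • U s)
    (hdU : ∀ s, deriv U s = (-kn s) • T s + (-tg s) • V s)
    (hkg : ∀ s, kg s ≠ 0)
    -- F is a fixed antiderivative of k_n τ_g / k_g
    (hF : ∀ s, HasDerivAt F (kn s * tg s / kg s) s)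
    (hy₃ : ∀ s, y₃ s = c₁ * Real.exp (-F s))
    (hy₁ : ∀ s, y₁ s = (tg s / kg s) * y₃ s)
    (hy₂ : ∀ s, y₂ s = 0)
    (hγ : ∀ s, γ s = α s + y₁ s • T s + y₃ s • U s) :
    (∀ s, deriv y₂ s + kg s * y₁ s - tg s * y₃ s = 0) ∧
    (∀ s, deriv y₃ s + kn s * y₁ s + tg s * y₂ s = 0) ∧
    (∃ r : ℝ → ℝ, ∀ s, deriv γ s = r s • T s) := by
  have hy₂fun : y₂ = fun _ => (0 : ℝ) := funext hy₂
  have hy₃fun : y₃ = fun s => c₁ * Real.exp (-F s) := funext hy₃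
  have hγfun : γ = fun s => α s + y₁ s • T s + y₃ s • U s := funext hγ
  have hy₃d : ∀ s, HasDerivAt y₃ (-(kn s * tg s / kg s) * y₃ s) s := by
    intro s
    have h := (((hF s).neg).exp).const_mul c₁
    have hv : -(kn s * tg s / kg s) * y₃ s
        = c₁ * (Real.exp (-F s) * -(kn s * tg s / kg s)) := by
      rw [hy₃ s]; ring
    rw [hv, hy₃fun]
    exact h
  have hy₃diff : Differentiable ℝ y₃ := fun s => (hy₃d s).differentiableAt
  have hy₁diff : Differentiable ℝ y₁ := by
    rw [funext hy₁]
    exact fun s => (((htgd s).div (hkgd s) (hkg s)).mul (hy₃diff s))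
  refine ⟨?_, ?_, ?_⟩
  · intro s
    rw [hy₂fun, deriv_const, hy₁ s]
    field_simp [hkg s]
    ring
  · intro s
    rw [(hy₃d s).deriv, hy₁ s, hy₂ s]
    field_simp [hkg s]
    ring
  · refine ⟨fun s => 1 + deriv y₁ s - kn s * y₃ s, fun s => ?_⟩
    have h1 : HasDerivAt α (T s) s := by
      have := (hα s).hasDerivAt; rwa [hαT s] at this
    have h2 : HasDerivAt (fun s => y₁ s • T s)
        (y₁ s • (kg s • V s + kn s • U s) + deriv y₁ s • T s) s := by
      have := ((hy₁diff s).hasDerivAt).smul ((hT s).hasDerivAt)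
      rwa [hdT s] at this
    have h3 : HasDerivAt (fun s => y₃ s • U s)
        (y₃ s • ((-kn s) • T s + (-tg s) • V s)
          + (-(kn s * tg s / kg s) * y₃ s) • U s) s := by
      have := (hy₃d s).smul ((hU s).hasDerivAt)
      rwa [hdU s] at this
    have hγd := (h1.add h2).add h3
    rw [hγfun, show (fun s => α s + y₁ s • T s + y₃ s • U s) = ((α + fun s => y₁ s • T s) + fun s => y₃ s • U s) from rfl, hγd.deriv]
    have e1 : y₁ s * kg s - tg s * y₃ s = 0 := by
      rw [hy₁ s, sub_eq_zero, mul_right_comm, div_mul_cancel₀ _ (hkg s)]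
    have e3 : -(kn s * tg s / kg s) * y₃ s + y₁ s * kn s = 0 := by
      rw [hy₁ s]; field_simp [hkg s]; ring
    match_scalars
    · ring
    · linear_combination e1
    · linear_combination e3
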